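/- arXiv:1805.10151 — 5 statements merged into one kernel-verified Lean document; each statement's English description precedes it below -/
import Mathlib

section
/- If z ∈ K and z ≠ 0, then the nearest Gaussian integer [1/z] has absolute value at least √2; in particular [1/z] ∉ {0, 1, -1, i, -i}. -/
open Complex Set

set_option maxHeartbeats 1000000

/-- The fundamental domain K = {x + yi : x, y ∈ [-1/2, 1/2)}. -/
def K : Set ℂ := {z : ℂ | z.re ∈ Set.Ico (-(1:ℝ)/2) (1/2) ∧ z.im ∈ Set.Ico (-(1:ℝ)/2) (1/2)}

/-- The nearest integer to a real number t: the unique n with t - n ∈ [-1/2, 1/2). -/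
noncomputable def nint (t : ℝ) : ℤ := ⌊t + 1/2⌋

/-- The nearest Gaussian integer to a complex number, as a complex number. -/
noncomputable def gnint (w : ℂ) : ℂ := (nint w.re : ℂ) + (nint w.im : ℂ) * I

lemma nint_le (t : ℝ) : (nint t : ℝ) ≤ t + 1/2 := Int.floor_le _

lemma lt_nint (t : ℝ) : t - 1/2 < (nint t : ℝ) := by
  have := Int.lt_floor_add_one (t + 1/2)
  unfold nint
  linarith

/-- If z ∈ K is nonzero, the nearest Gaussian integer to 1/z has absolute value at least √2;
in particular it is none of 0, 1, -1, i, -i. -/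
theorem first_digit_abs_ge_sqrt_two {z : ℂ} (hz : z ∈ K) (hz0 : z ≠ 0) :
    Real.sqrt 2 ≤ ‖gnint (1 / z)‖ ∧
    gnint (1 / z) ∉ ({0, 1, -1, I, -I} : Set ℂ) := by
  have hw0 : (1 / z : ℂ) ≠ 0 := one_div_ne_zero hz0
  set w : ℂ := 1 / z with hw
  have hzw : z = w⁻¹ := by rw [hw, one_div, inv_inv]
  set a : ℝ := w.re with ha
  set b : ℝ := w.im with hb
  have hr : Complex.normSq w = a ^ 2 + b ^ 2 := by rw [Complex.normSq_apply]; ring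
  have hrpos : 0 < a ^ 2 + b ^ 2 := by rw [← hr]; exact Complex.normSq_pos.mpr hw0
  have hx : z.re = a / (a ^ 2 + b ^ 2) := by rw [hzw, Complex.inv_re, hr]
  have hy : z.im = -b / (a ^ 2 + b ^ 2) := by rw [hzw, Complex.inv_im, hr]
  obtain ⟨⟨hx1, hx2⟩, hy1, hy2⟩ := hz
  rw [hx] at hx1 hx2
  rw [hy] at hy1 hy2
  have hx1' : -(1:ℝ)/2 * (a ^ 2 + b ^ 2) ≤ a := (le_div_iff₀ hrpos).mp hx1
  have hx2' : a < 1/2 * (a ^ 2 + b ^ 2) := (div_lt_iff₀ hrpos).mp hx2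
  have hy1' : -(1:ℝ)/2 * (a ^ 2 + b ^ 2) ≤ -b := (le_div_iff₀ hrpos).mp hy1
  have hy2' : -b < 1/2 * (a ^ 2 + b ^ 2) := (div_lt_iff₀ hrpos).mp hy2
  set m : ℤ := nint a with hm
  set n : ℤ := nint b with hn
  have hm1 : (m : ℝ) ≤ a + 1/2 := nint_le a
  have hm2 : a - 1/2 < (m : ℝ) := lt_nint a
  have hn1 : (n : ℝ) ≤ b + 1/2 := nint_le b
  have hn2 : b - 1/2 < (n : ℝ) := lt_nint b
  have key : 2 ≤ m ^ 2 + n ^ 2 := by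
    by_contra h
    push_neg at h
    have hmb : -1 ≤ m ∧ m ≤ 1 := by
      constructor <;> nlinarith [sq_nonneg (m + 1), sq_nonneg (m - 1), sq_nonneg n]
    have hnb : -1 ≤ n ∧ n ≤ 1 := by
      constructor <;> nlinarith [sq_nonneg (n + 1), sq_nonneg (n - 1), sq_nonneg m]
    obtain ⟨hmL, hmR⟩ := hmb
    obtain ⟨hnL, hnR⟩ := hnb
    interval_cases m <;> interval_cases n <;>
        simp only [Int.cast_neg, Int.cast_one, Int.cast_zero] at hm1 hm2 hn1 hn2 h
    · norm_num at h
    · -- m = -1, n = 0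
      nlinarith [mul_nonneg (by linarith : (0:ℝ) ≤ a + 3/2) (by linarith : (0:ℝ) ≤ -1/2 - a),
        mul_nonneg (by linarith : (0:ℝ) ≤ b + 1/2) (by linarith : (0:ℝ) ≤ 1/2 - b)]
    · norm_num at h
    · -- m = 0, n = -1
      nlinarith [mul_nonneg (by linarith : (0:ℝ) ≤ b + 3/2) (by linarith : (0:ℝ) ≤ -1/2 - b),
        mul_nonneg (by linarith : (0:ℝ) ≤ a + 1/2) (by linarith : (0:ℝ) ≤ 1/2 - a)]
    · -- m = 0, n = 0
      nlinarith [mul_nonneg (by linarith : (0:ℝ) ≤ 1/2 * (a ^ 2 + b ^ 2) - a)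
          (by linarith : (0:ℝ) ≤ 1/2 * (a ^ 2 + b ^ 2) + a),
        mul_nonneg (by linarith : (0:ℝ) ≤ 1/2 * (a ^ 2 + b ^ 2) - b)
          (by linarith : (0:ℝ) ≤ 1/2 * (a ^ 2 + b ^ 2) + b),
        mul_nonneg (by linarith : (0:ℝ) ≤ 1/2 - a) (by linarith : (0:ℝ) ≤ a + 1/2),
        mul_nonneg (by linarith : (0:ℝ) ≤ 1/2 - b) (by linarith : (0:ℝ) ≤ b + 1/2),
        mul_pos hrpos hrpos]
    · -- m = 0, n = 1
      nlinarith [mul_nonneg (by linarith : (0:ℝ) ≤ 3/2 - b) (by linarith : (0:ℝ) ≤ b - 1/2),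
        mul_nonneg (by linarith : (0:ℝ) ≤ a + 1/2) (by linarith : (0:ℝ) ≤ 1/2 - a)]
    · norm_num at h
    · -- m = 1, n = 0
      nlinarith [mul_nonneg (by linarith : (0:ℝ) ≤ 3/2 - a) (by linarith : (0:ℝ) ≤ a - 1/2),
        mul_nonneg (by linarith : (0:ℝ) ≤ b + 1/2) (by linarith : (0:ℝ) ≤ 1/2 - b)]
    · norm_num at h
  have hgre : (gnint w).re = (m : ℝ) := by simp [gnint, hm, hn, ha, hb]
  have hgim : (gnint w).im = (n : ℝ) := by simp [gnint, hm, hn, ha, hb]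
  have habs2 : ‖gnint w‖ ^ 2 = (m : ℝ) ^ 2 + (n : ℝ) ^ 2 := by
    rw [Complex.sq_norm, Complex.normSq_apply, hgre, hgim]; ring
  have h2le : (2 : ℝ) ≤ ‖gnint w‖ ^ 2 := by
    rw [habs2]; exact_mod_cast by exact_mod_cast key
  have hge : Real.sqrt 2 ≤ ‖gnint w‖ := by
    calc Real.sqrt 2 ≤ Real.sqrt (‖gnint w‖ ^ 2) := Real.sqrt_le_sqrt h2le
    _ = ‖gnint w‖ := Real.sqrt_sq (norm_nonneg _)
  refine ⟨hge, ?_⟩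
  intro hmem
  have hlt : ‖gnint w‖ ≤ 1 := by
    simp only [Set.mem_insert_iff, Set.mem_singleton_iff] at hmem
    rcases hmem with h | h | h | h | h <;> rw [h] <;> simp
  have : Real.sqrt 2 ≤ 1 := le_trans hge hlt
  have h2 : (1:ℝ) < Real.sqrt 2 := by
    rw [show (1:ℝ) = Real.sqrt 1 from (Real.sqrt_one).symm]
    exact Real.sqrt_lt_sqrt (by norm_num) (by norm_num)
  linarith
end

section
/- If z ∈ K is a Gaussian rational, then the Hurwitz continued fraction digit sequence of z terminates after finitely many steps. -/
open Complex Set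

/-- The Hurwitz complex continued fraction Gauss map. -/
noncomputable def hurwitzT (z : ℂ) : ℂ := if z = 0 then 0 else 1 / z - gnint (1 / z)

lemma nint_frac (t : ℝ) : t - nint t ∈ Set.Ico (-(1:ℝ)/2) (1/2) := by
  have h1 := Int.floor_le (t + 1/2)
  have h2 := Int.lt_floor_add_one (t + 1/2)
  constructor <;> simp only [nint] <;> linarith

lemma sub_gnint_mem_K (w : ℂ) : w - gnint w ∈ K := by
  have hre : (w - gnint w).re = w.re - nint w.re := by simp [gnint]
  have him : (w - gnint w).im = w.im - nint w.im := by simp [gnint]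
  exact ⟨hre ▸ nint_frac w.re, him ▸ nint_frac w.im⟩

lemma normSq_lt_one_of_mem_K {z : ℂ} (hz : z ∈ K) : Complex.normSq z < 1 := by
  obtain ⟨⟨h1, h2⟩, ⟨h3, h4⟩⟩ := hz
  rw [Complex.normSq_apply]
  nlinarith

open GaussianInt
lemma aux (N : ℕ) : ∀ α β : GaussianInt, (α.norm).natAbs < N →
    ∃ n : ℕ, hurwitzT^[n] ((α : ℂ) / (β : ℂ)) = 0 := by
  induction N with
  | zero => intro α β h; omega
  | succ N ih =>
    intro α β h
    set z : ℂ := (α : ℂ) / (β : ℂ) with hzdef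
    by_cases hz0 : z = 0
    · exact ⟨0, hz0⟩
    have hα : (α : ℂ) ≠ 0 := by
      intro h'; apply hz0; rw [hzdef, h', zero_div]
    have hβ : (β : ℂ) ≠ 0 := by
      intro h'; apply hz0; rw [hzdef, h', div_zero]
    have hw : 1 / z = (β : ℂ) / (α : ℂ) := by
      rw [hzdef, one_div_div]
    set a : GaussianInt := ⟨nint ((β : ℂ) / (α : ℂ)).re, nint ((β : ℂ) / (α : ℂ)).im⟩ with hadef
    have hga : gnint ((β : ℂ) / (α : ℂ)) = (a : ℂ) := by
      rw [gnint, hadef]; simp [toComplex_def]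
    have hT : hurwitzT z = ((β - a * α : GaussianInt) : ℂ) / (α : ℂ) := by
      rw [hurwitzT, if_neg hz0, hw, hga]
      push_cast
      field_simp
      rw [map_sub, map_mul]; ring
    have hTK : hurwitzT z ∈ K := by
      have := sub_gnint_mem_K (1 / z)
      rwa [hurwitzT, if_neg hz0]
    have hlt : ((β - a * α).norm).natAbs < (α.norm).natAbs := by
      have h1 : Complex.normSq (hurwitzT z) < 1 := normSq_lt_one_of_mem_K hTK
      rw [hT, normSq_div] at h1
      have hαn : 0 < Complex.normSq (α : ℂ) := Complex.normSq_pos.mpr hα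
      have h2 : Complex.normSq ((β - a * α : GaussianInt) : ℂ) < Complex.normSq (α : ℂ) := by
        rw [div_lt_one hαn] at h1; exact h1
      rw [← intCast_real_norm, ← intCast_real_norm] at h2
      have h3 : (β - a * α).norm < α.norm := by exact_mod_cast h2
      have h4 : 0 ≤ (β - a * α).norm := Zsqrtd.norm_nonneg (by norm_num) _
      omega
    obtain ⟨n, hn⟩ := ih (β - a * α) α (by omega)
    exact ⟨n + 1, by rw [Function.iterate_succ_apply, hT]; exact hn⟩

/-- If z ∈ K is a Gaussian rational, then its Hurwitz continued fraction
expansion terminates: some remainder zₙ = Tⁿ z equals 0. -/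
theorem gaussian_rational_imp_terminates {z : ℂ} (hz : z ∈ K)
    (hrat : ∃ a b : ℚ, z = (a : ℂ) + (b : ℂ) * I) :
    ∃ n : ℕ, hurwitzT^[n] z = 0 := by
  obtain ⟨a, b, hab⟩ := hrat
  set α : GaussianInt := ⟨a.num * b.den, b.num * a.den⟩ with hα
  set β : GaussianInt := ⟨(a.den : ℤ) * b.den, 0⟩ with hβ
  have hrepr : z = (α : ℂ) / (β : ℂ) := by
    rw [hab, hα, hβ, GaussianInt.toComplex_def', GaussianInt.toComplex_def']
    have had : (a.den : ℂ) ≠ 0 := by exact_mod_cast a.den_nz -- maybe wrong name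
    have hbd : (b.den : ℂ) ≠ 0 := by exact_mod_cast b.den_nz
    rw [Rat.cast_def, Rat.cast_def]
    push_cast
    field_simp
    ring
  rw [hrepr]
  exact aux ((α.norm).natAbs + 1) α β (by omega)
end

section
/- For any measurable E contained in a set where the first Hurwitz digit a of the first coordinate is constant, the measure with density 1/|zw+1|^4 is preserved under the map (z,w) ↦ (1/z - a, 1/(a+w)); equivalently, the integrand identity |((1/z - a)·(1/(a+w)) + 1)|^4 · |z|^4 · |a+w|^4 = |zw+1|^4 holds for all z ≠ 0, w ≠ -a. -/
open Complex

/-- The integrand identity showing that the measure with density 1/|zw+1|⁴ is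
preserved under (z, w) ↦ (1/z - a, 1/(a+w)):
|(1/z - a)·(1/(a+w)) + 1|⁴ · |z|⁴ · |a+w|⁴ = |zw + 1|⁴ for z ≠ 0, w ≠ -a. -/
theorem density_invariance_identity (z w : ℂ) (a : GaussianInt)
    (hz : z ≠ 0) (hw : w ≠ -(a : ℂ)) :
    ‖(1 / z - (a : ℂ)) * (1 / ((a : ℂ) + w)) + 1‖ ^ 4 *
        ‖z‖ ^ 4 * ‖(a : ℂ) + w‖ ^ 4 =
      ‖z * w + 1‖ ^ 4 := by
  have haw : (a : ℂ) + w ≠ 0 := by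
    intro h; apply hw; linear_combination h
  have key : ((1 / z - (a : ℂ)) * (1 / ((a : ℂ) + w)) + 1) * z * ((a : ℂ) + w)
      = z * w + 1 := by
    field_simp
    ring
  calc ‖(1 / z - (a : ℂ)) * (1 / ((a : ℂ) + w)) + 1‖ ^ 4 *
        ‖z‖ ^ 4 * ‖(a : ℂ) + w‖ ^ 4
      = ‖((1 / z - (a : ℂ)) * (1 / ((a : ℂ) + w)) + 1) * z * ((a : ℂ) + w)‖ ^ 4 := by
        rw [norm_mul, norm_mul, mul_pow, mul_pow]
    _ = ‖z * w + 1‖ ^ 4 := by rw [key]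
end

section
/- The open set K₁,₁ = {z ∈ K° : |z + 1 + i| < 1}, together with its rotations by powers of i and the corresponding sets K₂,ℓ and K₃,ℓ, cover K up to a Lebesgue-null set; that is, the complement in K of the union of the twelve open regions K_{k,ℓ} has two-dimensional Lebesgue measure zero. -/
open Complex Set MeasureTheory

/-- The three base regions of analyticity. -/
def Kbase : Fin 3 → Set ℂ
  | 0 => {z ∈ K | ‖z + 1 + I‖ < 1}
  | 1 => {z ∈ K | 1 < ‖z + 1 + I‖ ∧ ‖z + 1‖ < 1 ∧
            ‖z + I‖ < 1}
  | 2 => {z ∈ K | ‖z + 1‖ < 1 ∧ 1 < ‖z + I‖ ∧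
            1 < ‖z - I‖}

/-- The twelve regions K_{k,ℓ} = i^{ℓ-1} · (base region k). -/
noncomputable def Kreg (k : Fin 3) (l : Fin 4) : Set ℂ :=
  (fun z : ℂ => I ^ (l : ℕ) * z) '' Kbase k

lemma main_real (x y : ℝ) (hx1 : -(1:ℝ)/2 < x) (hx2 : x < 1/2) (hy1 : -(1:ℝ)/2 < y) (hy2 : y < 1/2)
    (hA : (x+1)^2+(y+1)^2 ≠ 1) (hB : (x-1)^2+(y+1)^2 ≠ 1) (hC : (x+1)^2+(y-1)^2 ≠ 1)
    (hD : (x-1)^2+(y-1)^2 ≠ 1) (hP : (x+1)^2+y^2 ≠ 1) (hQ : x^2+(y+1)^2 ≠ 1)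
    (hR : (x-1)^2+y^2 ≠ 1) (hS : x^2+(y-1)^2 ≠ 1) :
    ((x+1)^2+(y+1)^2 < 1) ∨ ((x-1)^2+(y+1)^2 < 1) ∨ ((x+1)^2+(y-1)^2 < 1) ∨ ((x-1)^2+(y-1)^2 < 1) ∨
    (1 < (x+1)^2+(y+1)^2 ∧ (x+1)^2+y^2 < 1 ∧ x^2+(y+1)^2 < 1) ∨
    (1 < (x-1)^2+(y+1)^2 ∧ x^2+(y+1)^2 < 1 ∧ (x-1)^2+y^2 < 1) ∨
    (1 < (x-1)^2+(y-1)^2 ∧ (x-1)^2+y^2 < 1 ∧ x^2+(y-1)^2 < 1) ∨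
    (1 < (x+1)^2+(y-1)^2 ∧ x^2+(y-1)^2 < 1 ∧ (x+1)^2+y^2 < 1) ∨
    ((x+1)^2+y^2 < 1 ∧ 1 < x^2+(y+1)^2 ∧ 1 < x^2+(y-1)^2) ∨
    (x^2+(y+1)^2 < 1 ∧ 1 < (x-1)^2+y^2 ∧ 1 < (x+1)^2+y^2) ∨
    ((x-1)^2+y^2 < 1 ∧ 1 < x^2+(y-1)^2 ∧ 1 < x^2+(y+1)^2) ∨
    (x^2+(y-1)^2 < 1 ∧ 1 < (x+1)^2+y^2 ∧ 1 < (x-1)^2+y^2) := by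
  rcases hA.lt_or_gt with hA | hA
  · exact Or.inl hA
  rcases hB.lt_or_gt with hB | hB
  · exact Or.inr (Or.inl hB)
  rcases hC.lt_or_gt with hC | hC
  · exact Or.inr (Or.inr (Or.inl hC))
  rcases hD.lt_or_gt with hD | hD
  · exact Or.inr (Or.inr (Or.inr (Or.inl hD)))
  rcases hP.lt_or_gt with hP | hP
  · rcases hQ.lt_or_gt with hQ | hQ
    · exact Or.inr (Or.inr (Or.inr (Or.inr (Or.inl ⟨hA, hP, hQ⟩))))
    · rcases hR.lt_or_gt with hR | hR
      · rcases hS.lt_or_gt with hS | hS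
        · exact Or.inr (Or.inr (Or.inr (Or.inr (Or.inr (Or.inr (Or.inl ⟨hD, hR, hS⟩))))))
        · exact Or.inr (Or.inr (Or.inr (Or.inr (Or.inr (Or.inr (Or.inr (Or.inr (Or.inl ⟨hP, hQ, hS⟩))))))))
      · rcases hS.lt_or_gt with hS | hS
        · exact Or.inr (Or.inr (Or.inr (Or.inr (Or.inr (Or.inr (Or.inr (Or.inl ⟨hC, hS, hP⟩)))))))
        · exact Or.inr (Or.inr (Or.inr (Or.inr (Or.inr (Or.inr (Or.inr (Or.inr (Or.inl ⟨hP, hQ, hS⟩))))))))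
  · rcases hQ.lt_or_gt with hQ | hQ
    · rcases hR.lt_or_gt with hR | hR
      · exact Or.inr (Or.inr (Or.inr (Or.inr (Or.inr (Or.inl ⟨hB, hQ, hR⟩)))))
      · exact Or.inr (Or.inr (Or.inr (Or.inr (Or.inr (Or.inr (Or.inr (Or.inr (Or.inr (Or.inl ⟨hQ, hR, hP⟩)))))))))
    · rcases hR.lt_or_gt with hR | hR
      · rcases hS.lt_or_gt with hS | hS
        · exact Or.inr (Or.inr (Or.inr (Or.inr (Or.inr (Or.inr (Or.inl ⟨hD, hR, hS⟩))))))
        · exact Or.inr (Or.inr (Or.inr (Or.inr (Or.inr (Or.inr (Or.inr (Or.inr (Or.inr (Or.inr (Or.inl ⟨hR, hS, hQ⟩))))))))))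
      · rcases hS.lt_or_gt with hS | hS
        · exact Or.inr (Or.inr (Or.inr (Or.inr (Or.inr (Or.inr (Or.inr (Or.inr (Or.inr (Or.inr (Or.inr ⟨hS, hP, hR⟩))))))))))
        · exfalso
          have p1 : 2*x < x^2+y^2 := by nlinarith
          have p2 : -(2*x) < x^2+y^2 := by nlinarith
          have p3 : 2*y < x^2+y^2 := by nlinarith
          have p4 : -(2*y) < x^2+y^2 := by nlinarith
          clear hA hB hC hD hP hQ hR hS
          have rpos : 0 < x^2+y^2 := by linarith
          have q1 : 4*x^2 < (x^2+y^2)^2 := by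
            nlinarith [mul_pos (by linarith : (0:ℝ) < x^2+y^2-2*x) (by linarith : (0:ℝ) < x^2+y^2+2*x)]
          have q2 : 4*y^2 < (x^2+y^2)^2 := by
            nlinarith [mul_pos (by linarith : (0:ℝ) < x^2+y^2-2*y) (by linarith : (0:ℝ) < x^2+y^2+2*y)]
          have rsmall : x^2+y^2 < 1/2 := by nlinarith
          have q3 : (x^2+y^2)^2 < (x^2+y^2)*(1/2) := by
            rw [pow_two]; exact mul_lt_mul_of_pos_left rsmall rpos
          linarith [q1, q2, q3, rpos]

lemma abs_lt_one' (u : ℂ) (h : u.re^2 + u.im^2 < 1) : ‖u‖ < 1 := by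
  have h2 : ‖u‖^2 < 1 := by rw [Complex.sq_norm, Complex.normSq_apply]; nlinarith
  nlinarith [norm_nonneg u]

lemma one_lt_abs' (u : ℂ) (h : 1 < u.re^2 + u.im^2) : 1 < ‖u‖ := by
  have h2 : 1 < ‖u‖^2 := by rw [Complex.sq_norm, Complex.normSq_apply]; nlinarith
  nlinarith [norm_nonneg u]

lemma abs_eq_one' (u : ℂ) (h : u.re^2 + u.im^2 = 1) : ‖u‖ = 1 := by
  have h2 : ‖u‖^2 = 1 := by rw [Complex.sq_norm, Complex.normSq_apply]; nlinarith
  nlinarith [norm_nonneg u]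

lemma mem_K' (a b : ℝ) (h1 : -(1:ℝ)/2 < a) (h2 : a < 1/2) (h3 : -(1:ℝ)/2 < b) (h4 : b < 1/2) :
    (⟨a, b⟩ : ℂ) ∈ K := ⟨⟨h1.le, h2⟩, ⟨h3.le, h4⟩⟩

lemma mem_Kbase0 (a b : ℝ) (h1 : -(1:ℝ)/2 < a) (h2 : a < 1/2) (h3 : -(1:ℝ)/2 < b) (h4 : b < 1/2)
    (h5 : (a+1)^2 + (b+1)^2 < 1) : (⟨a, b⟩ : ℂ) ∈ Kbase 0 := by
  refine ⟨mem_K' a b h1 h2 h3 h4, abs_lt_one' _ ?_⟩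
  simp [Complex.add_re, Complex.add_im]
  nlinarith

lemma mem_Kbase1 (a b : ℝ) (h1 : -(1:ℝ)/2 < a) (h2 : a < 1/2) (h3 : -(1:ℝ)/2 < b) (h4 : b < 1/2)
    (h5 : 1 < (a+1)^2 + (b+1)^2) (h6 : (a+1)^2 + b^2 < 1) (h7 : a^2 + (b+1)^2 < 1) :
    (⟨a, b⟩ : ℂ) ∈ Kbase 1 := by
  refine ⟨mem_K' a b h1 h2 h3 h4, one_lt_abs' _ ?_, abs_lt_one' _ ?_, abs_lt_one' _ ?_⟩ <;>
    · simp [Complex.add_re, Complex.add_im]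
      nlinarith

lemma mem_Kbase2 (a b : ℝ) (h1 : -(1:ℝ)/2 < a) (h2 : a < 1/2) (h3 : -(1:ℝ)/2 < b) (h4 : b < 1/2)
    (h5 : (a+1)^2 + b^2 < 1) (h6 : 1 < a^2 + (b+1)^2) (h7 : 1 < a^2 + (b-1)^2) :
    (⟨a, b⟩ : ℂ) ∈ Kbase 2 := by
  refine ⟨mem_K' a b h1 h2 h3 h4, abs_lt_one' _ ?_, one_lt_abs' _ ?_, one_lt_abs' _ ?_⟩ <;>
    · simp [Complex.add_re, Complex.add_im, Complex.sub_re, Complex.sub_im]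
      nlinarith

lemma line_re_null (a : ℝ) : volume {z : ℂ | z.re = a} = 0 := by
  have h := Complex.volume_preserving_equiv_real_prod
  have he : {z : ℂ | z.re = a} = Complex.measurableEquivRealProd ⁻¹' ({a} ×ˢ Set.univ) := by
    ext z; simp [Complex.measurableEquivRealProd, Set.mem_prod, eq_comm]
  rw [he, h.measure_preimage ((measurableSet_singleton a).prod MeasurableSet.univ).nullMeasurableSet,
    show (volume : Measure (ℝ×ℝ)) = volume.prod volume from rfl, Measure.prod_prod]
  simp

lemma line_im_null (a : ℝ) : volume {z : ℂ | z.im = a} = 0 := by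
  have h := Complex.volume_preserving_equiv_real_prod
  have he : {z : ℂ | z.im = a} = Complex.measurableEquivRealProd ⁻¹' (Set.univ ×ˢ {a}) := by
    ext z; simp [Complex.measurableEquivRealProd, Set.mem_prod, eq_comm]
  rw [he, h.measure_preimage (MeasurableSet.univ.prod (measurableSet_singleton a)).nullMeasurableSet,
    show (volume : Measure (ℝ×ℝ)) = volume.prod volume from rfl, Measure.prod_prod]
  simp

set_option maxHeartbeats 1000000 in
/-- The twelve open regions K_{k,ℓ} cover K up to a Lebesgue-null set. -/
theorem Kreg_cover_ae : volume (K \ ⋃ (k : Fin 3) (l : Fin 4), Kreg k l) = 0 := by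
  have hsub : K \ (⋃ (k : Fin 3) (l : Fin 4), Kreg k l) ⊆
      {z : ℂ | z.re = -(1:ℝ)/2} ∪ {z : ℂ | z.im = -(1:ℝ)/2} ∪ Metric.sphere (-1-I) 1 ∪
      Metric.sphere (1-I) 1 ∪ Metric.sphere (-1+I) 1 ∪ Metric.sphere (1+I) 1 ∪
      Metric.sphere (-1) 1 ∪ Metric.sphere (-I) 1 ∪ Metric.sphere 1 1 ∪ Metric.sphere I 1 := by
    rintro ⟨x, y⟩ ⟨hK, hU⟩
    by_contra hzE
    simp only [Set.mem_union, not_or, Metric.mem_sphere, Set.mem_setOf_eq] at hzE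
    obtain ⟨⟨⟨⟨⟨⟨⟨⟨⟨hre, him⟩, s1⟩, s2⟩, s3⟩, s4⟩, s5⟩, s6⟩, s7⟩, s8⟩ := hzE
    obtain ⟨⟨hx1', hx2⟩, ⟨hy1', hy2⟩⟩ := hK
    have hx1 : -(1:ℝ)/2 < x := lt_of_le_of_ne hx1' (fun h => hre h.symm)
    have hy1 : -(1:ℝ)/2 < y := lt_of_le_of_ne hy1' (fun h => him h.symm)
    have key : ∀ (k : Fin 3) (l : Fin 4) (w : ℂ), w ∈ Kbase k →
        I ^ (l : ℕ) * w = (⟨x, y⟩ : ℂ) → False := by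
      intro k l w hw he
      exact hU (mem_iUnion.mpr ⟨k, mem_iUnion.mpr ⟨l, ⟨w, hw, he⟩⟩⟩)
    have sqne : ∀ (c : ℂ), ¬ dist (⟨x, y⟩ : ℂ) c = 1 → (x - c.re)^2 + (y - c.im)^2 ≠ 1 := by
      intro c hc h
      exact hc (by rw [Complex.dist_eq]; exact abs_eq_one' _ (by simpa using h))
    have hA := sqne _ s1 ; have hB := sqne _ s2 ; have hC := sqne _ s3 ; have hD := sqne _ s4
    have hP := sqne _ s5 ; have hQ := sqne _ s6 ; have hR := sqne _ s7 ; have hS := sqne _ s8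
    simp only [Complex.sub_re, Complex.sub_im, Complex.add_re, Complex.add_im, Complex.neg_re,
      Complex.neg_im, Complex.one_re, Complex.one_im, Complex.I_re, Complex.I_im] at hA hB hC hD hP hQ hR hS
    have hA' : (x+1)^2+(y+1)^2 ≠ 1 := fun h => hA (by linear_combination h)
    have hB' : (x-1)^2+(y+1)^2 ≠ 1 := fun h => hB (by linear_combination h)
    have hC' : (x+1)^2+(y-1)^2 ≠ 1 := fun h => hC (by linear_combination h)
    have hD' : (x-1)^2+(y-1)^2 ≠ 1 := fun h => hD (by linear_combination h)
    have hP' : (x+1)^2+y^2 ≠ 1 := fun h => hP (by linear_combination h)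
    have hQ' : x^2+(y+1)^2 ≠ 1 := fun h => hQ (by linear_combination h)
    have hR' : (x-1)^2+y^2 ≠ 1 := fun h => hR (by linear_combination h)
    have hS' : x^2+(y-1)^2 ≠ 1 := fun h => hS (by linear_combination h)
    rcases main_real x y hx1 hx2 hy1 hy2 hA' hB' hC' hD' hP' hQ' hR' hS' with
      h | h | h | h | ⟨h1, h2, h3⟩ | ⟨h1, h2, h3⟩ | ⟨h1, h2, h3⟩ | ⟨h1, h2, h3⟩ |
      ⟨h1, h2, h3⟩ | ⟨h1, h2, h3⟩ | ⟨h1, h2, h3⟩ | ⟨h1, h2, h3⟩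
    · exact key 0 ⟨0, by norm_num⟩ ⟨x, y⟩
        (mem_Kbase0 x y hx1 hx2 hy1 hy2 (by linarith [h])) (by simp)
    · exact key 0 ⟨1, by norm_num⟩ ⟨y, -x⟩
        (mem_Kbase0 y (-x) hy1 hy2 (by linarith) (by linarith) (by linarith [h]))
        (by apply Complex.ext <;> simp [Complex.mul_re, Complex.mul_im])
    · exact key 0 ⟨3, by norm_num⟩ ⟨-y, x⟩
        (mem_Kbase0 (-y) x (by linarith) (by linarith) hx1 hx2 (by linarith [h]))
        (by rw [pow_succ, Complex.I_sq]; apply Complex.ext <;> simp [Complex.mul_re, Complex.mul_im])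
    · exact key 0 ⟨2, by norm_num⟩ ⟨-x, -y⟩
        (mem_Kbase0 (-x) (-y) (by linarith) (by linarith) (by linarith) (by linarith) (by linarith [h]))
        (by rw [Complex.I_sq]; apply Complex.ext <;> simp)
    · exact key 1 ⟨0, by norm_num⟩ ⟨x, y⟩
        (mem_Kbase1 x y hx1 hx2 hy1 hy2 (by linarith [h1]) (by linarith [h2]) (by linarith [h3])) (by simp)
    · exact key 1 ⟨1, by norm_num⟩ ⟨y, -x⟩
        (mem_Kbase1 y (-x) hy1 hy2 (by linarith) (by linarith) (by linarith [h1]) (by linarith [h2]) (by linarith [h3]))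
        (by apply Complex.ext <;> simp [Complex.mul_re, Complex.mul_im])
    · exact key 1 ⟨2, by norm_num⟩ ⟨-x, -y⟩
        (mem_Kbase1 (-x) (-y) (by linarith) (by linarith) (by linarith) (by linarith) (by linarith [h1]) (by linarith [h2]) (by linarith [h3]))
        (by rw [Complex.I_sq]; apply Complex.ext <;> simp)
    · exact key 1 ⟨3, by norm_num⟩ ⟨-y, x⟩
        (mem_Kbase1 (-y) x (by linarith) (by linarith) hx1 hx2 (by linarith [h1]) (by linarith [h2]) (by linarith [h3]))
        (by rw [pow_succ, Complex.I_sq]; apply Complex.ext <;> simp [Complex.mul_re, Complex.mul_im])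
    · exact key 2 ⟨0, by norm_num⟩ ⟨x, y⟩
        (mem_Kbase2 x y hx1 hx2 hy1 hy2 (by linarith [h1]) (by linarith [h2]) (by linarith [h3])) (by simp)
    · exact key 2 ⟨1, by norm_num⟩ ⟨y, -x⟩
        (mem_Kbase2 y (-x) hy1 hy2 (by linarith) (by linarith) (by linarith [h1]) (by linarith [h2]) (by linarith [h3]))
        (by apply Complex.ext <;> simp [Complex.mul_re, Complex.mul_im])
    · exact key 2 ⟨2, by norm_num⟩ ⟨-x, -y⟩
        (mem_Kbase2 (-x) (-y) (by linarith) (by linarith) (by linarith) (by linarith) (by linarith [h1]) (by linarith [h2]) (by linarith [h3]))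
        (by rw [Complex.I_sq]; apply Complex.ext <;> simp)
    · exact key 2 ⟨3, by norm_num⟩ ⟨-y, x⟩
        (mem_Kbase2 (-y) x (by linarith) (by linarith) hx1 hx2 (by linarith [h1]) (by linarith [h2]) (by linarith [h3]))
        (by rw [pow_succ, Complex.I_sq]; apply Complex.ext <;> simp [Complex.mul_re, Complex.mul_im])
  refine measure_mono_null hsub ?_
  have sph : ∀ c : ℂ, volume (Metric.sphere c 1) = 0 := fun c => Measure.addHaar_sphere volume c 1
  simp only [measure_union_null_iff]
  exact ⟨⟨⟨⟨⟨⟨⟨⟨⟨line_re_null _, line_im_null _⟩, sph _⟩, sph _⟩, sph _⟩, sph _⟩, sph _⟩, sph _⟩, sph _⟩, sph _⟩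
end

section
/- If z ∈ K satisfies [1/z] = 2 (i.e., the first Hurwitz digit is 2), then T(z) = 1/z - 2 does not satisfy |T(z) + 1| < 1; equivalently, Re(1/T(z)) ≥ -1/2 whenever T(z) ≠ 0. -/
open Complex Set

/-- If the first Hurwitz digit of z ∈ K is 2, then T(z) does not satisfy |T(z)+1| < 1;
equivalently Re(1/T(z)) ≥ -1/2 whenever T(z) ≠ 0. -/
theorem digit_two_restriction {z : ℂ} (hz : z ∈ K) (hz0 : z ≠ 0)
    (hdig : gnint (1 / z) = 2) :
    ¬ ‖hurwitzT z + 1‖ < 1 ∧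
      (hurwitzT z ≠ 0 → -(1/2 : ℝ) ≤ (1 / hurwitzT z).re) := by
  have hre : z.re < 1/2 := hz.1.2
  have hs : 0 < Complex.normSq z := Complex.normSq_pos.mpr hz0
  have hT : hurwitzT z = 1/z - 2 := by rw [hurwitzT, if_neg hz0, hdig]
  have h1 : hurwitzT z + 1 = (1 - z)/z := by
    rw [hT]; field_simp; ring
  have key : 1 ≤ Complex.normSq (hurwitzT z + 1) := by
    rw [h1, map_div₀, le_div_iff₀ hs]
    simp only [Complex.normSq_apply, Complex.sub_re, Complex.sub_im, Complex.one_re,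
      Complex.one_im]
    nlinarith
  constructor
  · intro habs
    have h2 : ‖hurwitzT z + 1‖ ^ 2 = Complex.normSq (hurwitzT z + 1) :=
      Complex.sq_norm _
    have h3 : (0:ℝ) ≤ ‖hurwitzT z + 1‖ := norm_nonneg _
    nlinarith
  · intro hT0
    have hns : 0 < Complex.normSq (hurwitzT z) := Complex.normSq_pos.mpr hT0
    have hrinv : (1 / hurwitzT z).re = (hurwitzT z).re / Complex.normSq (hurwitzT z) := by
      rw [one_div, Complex.inv_re]
    rw [hrinv, le_div_iff₀ hns]
    have hexp : Complex.normSq (hurwitzT z + 1)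
        = Complex.normSq (hurwitzT z) + 2 * (hurwitzT z).re + 1 := by
      simp only [Complex.normSq_apply, Complex.add_re, Complex.add_im, Complex.one_re,
        Complex.one_im]
      ring
    nlinarith
end
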